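/- For every s ∈ ℕ there exists C ≥ 1 such that for every m = 0,…,s and every n ∈ ℕ there is an integrable w : ℝ → ℂ with (d/dx)^n [(x−i)^m · e^{−x²}] = ∫_ℝ w(τ)·e^{ixτ} dτ for all x ∈ ℝ and ∫_ℝ |w(τ)| dτ ≤ C^{n+1}·√(n!). That is, the Gaussian x ↦ e^{−x²} belongs to the class 𝓔_s^{1/2} for every s ∈ ℕ. -/

import Mathlib

noncomputable section StmtAux

open MeasureTheory Polynomial Complex Real Filter

/-- Gaussian weight on the frequency side. -/
def gw (τ : ℝ) : ℂ := Complex.exp (-(τ:ℂ)^2/4)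

lemma norm_gw (τ : ℝ) : ‖gw τ‖ = Real.exp (-(1/4) * τ^2) := by
  rw [gw, show (-(τ:ℂ)^2/4) = ((-(1/4) * τ^2 : ℝ) : ℂ) by push_cast; ring,
    Complex.norm_exp, Complex.ofReal_re]

/-- weight associated to a polynomial -/
def pwt (P : Polynomial ℂ) (τ : ℝ) : ℂ := P.eval (τ:ℂ) * gw τ

lemma continuous_pwt (P : Polynomial ℂ) : Continuous (pwt P) := by
  apply Continuous.mul
  · exact P.continuous_aeval.comp Complex.continuous_ofReal
  · exact (Continuous.mul (by continuity) (by continuity)).cexp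

lemma integrable_abs_pow_gauss (k : ℕ) :
    Integrable (fun τ : ℝ => |τ|^k * Real.exp (-(1/4) * τ^2)) := by
  have h0 := integrable_rpow_mul_exp_neg_mul_sq (b := 1/4) (by norm_num)
    (s := (k:ℝ)) (by exact_mod_cast neg_one_lt_zero.trans_le k.cast_nonneg)
  simp_rw [Real.rpow_natCast] at h0
  have h := h0.abs
  refine h.congr (Filter.Eventually.of_forall fun τ => ?_)
  simp only [abs_mul, ← pow_abs, abs_of_pos (Real.exp_pos _)]

lemma integrable_pwt (P : Polynomial ℂ) : Integrable (pwt P) := by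
  induction P using Polynomial.induction_on' with
  | add p q hp hq =>
      have : pwt (p + q) = fun τ => pwt p τ + pwt q τ := by
        funext τ; simp [pwt, add_mul]
      rw [this]; exact hp.add hq
  | monomial k a =>
      refine Integrable.mono' ((integrable_abs_pow_gauss k).const_mul ‖a‖)
        (continuous_pwt _).aestronglyMeasurable
        (Filter.Eventually.of_forall fun τ => ?_)
      simp only [pwt, eval_monomial, norm_mul, norm_pow, norm_gw, Complex.norm_real,
        Real.norm_eq_abs]
      ring_nf
      exact le_of_eq (by ring)

section Moment

lemma pow_le_gauss (k : ℕ) (τ : ℝ) :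
    |τ|^k ≤ (1 + 8^((k+1)/2) * (Nat.factorial ((k+1)/2) : ℝ)) * Real.exp ((1/8) * τ^2) := by
  set j := (k+1)/2 with hj
  have hfac : (1:ℝ) ≤ Nat.factorial j := by exact_mod_cast (Nat.factorial_pos j)
  have hexp1 : (1:ℝ) ≤ Real.exp ((1/8) * τ^2) := Real.one_le_exp (by positivity)
  have hkey : (τ^2)^j ≤ 8^j * (Nat.factorial j : ℝ) * Real.exp ((1/8) * τ^2) := by
    have h1 : (τ^2/8)^j / (Nat.factorial j : ℝ) ≤ Real.exp (τ^2/8) := by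
      calc (τ^2/8)^j / (Nat.factorial j : ℝ)
          ≤ ∑ i ∈ Finset.range (j+1), (τ^2/8)^i / (Nat.factorial i : ℝ) := by
            refine Finset.single_le_sum (f := fun i => (τ^2/8)^i / (Nat.factorial i : ℝ))
              (fun i _ => by positivity) (Finset.self_mem_range_succ j)
        _ ≤ Real.exp (τ^2/8) := Real.sum_le_exp_of_nonneg (by positivity) _
    have h8 : (0:ℝ) < 8^j := by positivity
    rw [div_pow, div_div] at h1
    have := (div_le_iff₀ (by positivity)).mp h1
    calc (τ^2)^j ≤ Real.exp (τ^2/8) * (8^j * (Nat.factorial j : ℝ)) := this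
      _ = 8^j * (Nat.factorial j : ℝ) * Real.exp ((1/8) * τ^2) := by ring_nf
  have h8pos : (0:ℝ) < 8^j := by positivity
  have hA : (1:ℝ) ≤ 1 + 8^j * (Nat.factorial j : ℝ) := by nlinarith
  rcases le_total |τ| 1 with h | h
  · calc |τ|^k ≤ 1 := pow_le_one₀ (abs_nonneg τ) h
      _ ≤ _ := by nlinarith [mul_le_mul hA hexp1 (by norm_num) (by linarith)]
  · have hk2j : k ≤ 2 * j := by omega
    calc |τ|^k ≤ |τ|^(2*j) := pow_le_pow_right₀ h hk2j
      _ = (τ^2)^j := by rw [pow_mul, _root_.sq_abs]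
      _ ≤ 8^j * (Nat.factorial j : ℝ) * Real.exp ((1/8) * τ^2) := hkey
      _ ≤ _ := by nlinarith [Real.exp_pos ((1/8) * τ^2)]

lemma moment_bound (k : ℕ) :
    ∫ τ : ℝ, |τ|^k * Real.exp (-(1/4) * τ^2) ≤ 256^(k+1) * Real.sqrt k.factorial := by
  set j := (k+1)/2 with hj
  set c : ℝ := 1 + 8^j * (Nat.factorial j : ℝ) with hc
  have hc0 : 0 < c := by positivity
  have hstep : ∫ τ : ℝ, |τ|^k * Real.exp (-(1/4) * τ^2)
      ≤ ∫ τ : ℝ, c * Real.exp (-(1/8) * τ^2) := by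
    refine integral_mono (integrable_abs_pow_gauss k)
      ((integrable_exp_neg_mul_sq (by norm_num : (0:ℝ) < 1/8)).const_mul c) fun τ => ?_
    have h1 := pow_le_gauss k τ
    have h2 : Real.exp ((1/8) * τ^2) * Real.exp (-(1/4) * τ^2) = Real.exp (-(1/8) * τ^2) := by
      rw [← Real.exp_add]; ring_nf
    calc |τ|^k * Real.exp (-(1/4) * τ^2)
        ≤ (c * Real.exp ((1/8) * τ^2)) * Real.exp (-(1/4) * τ^2) :=
          mul_le_mul_of_nonneg_right h1 (Real.exp_pos _).le
      _ = c * Real.exp (-(1/8) * τ^2) := by rw [mul_assoc, h2]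
  have hgauss : ∫ τ : ℝ, c * Real.exp (-(1/8) * τ^2) = c * Real.sqrt (π / (1/8)) := by
    rw [integral_const_mul, integral_gaussian]
  have hsq : Real.sqrt (π / (1/8)) ≤ 6 := by
    rw [show (6:ℝ) = Real.sqrt 36 by
      rw [show (36:ℝ) = 6^2 by norm_num, Real.sqrt_sq (by norm_num)]]
    exact Real.sqrt_le_sqrt (by nlinarith [Real.pi_le_four])
  -- bound c
  have hnat : (Nat.factorial j) * (Nat.factorial j) ≤ 2^(k+1) * Nat.factorial k := by
    calc Nat.factorial j * Nat.factorial j ≤ Nat.factorial (j + j) :=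
          Nat.le_of_dvd (Nat.factorial_pos _) (Nat.factorial_mul_factorial_dvd_factorial_add j j)
      _ ≤ Nat.factorial (k+1) := Nat.factorial_le (by omega)
      _ = (k+1) * Nat.factorial k := rfl
      _ ≤ 2^(k+1) * Nat.factorial k := by
          exact Nat.mul_le_mul_right _ (Nat.le_of_lt (Nat.lt_two_pow_self))
  have hfacR : (Nat.factorial j : ℝ) ≤ 2^(k+1) * Real.sqrt (Nat.factorial k) := by
    have h1 : (Nat.factorial j : ℝ) ≤ Real.sqrt (2^(k+1) * Nat.factorial k) := by
      rw [Real.le_sqrt (by positivity) (by positivity)]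
      have hR : ((Nat.factorial j * Nat.factorial j : ℕ) : ℝ)
          ≤ ((2^(k+1) * Nat.factorial k : ℕ) : ℝ) := Nat.cast_le.mpr hnat
      push_cast at hR ⊢
      nlinarith [hR]
    calc (Nat.factorial j : ℝ) ≤ Real.sqrt (2^(k+1) * Nat.factorial k) := h1
      _ = Real.sqrt (2^(k+1)) * Real.sqrt (Nat.factorial k) := Real.sqrt_mul (by positivity) _
      _ ≤ 2^(k+1) * Real.sqrt (Nat.factorial k) := by
          refine mul_le_mul_of_nonneg_right ?_ (Real.sqrt_nonneg _)
          have h1 : (1:ℝ) ≤ 2^(k+1) := one_le_pow₀ (by norm_num)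
          calc Real.sqrt (2^(k+1)) ≤ Real.sqrt ((2^(k+1))^2) := Real.sqrt_le_sqrt (by nlinarith)
            _ = 2^(k+1) := Real.sqrt_sq (by positivity)
  have hsqrt1 : (1:ℝ) ≤ Real.sqrt (Nat.factorial k) := by
    rw [show (1:ℝ) = Real.sqrt 1 by simp]
    exact Real.sqrt_le_sqrt (by exact_mod_cast Nat.one_le_iff_ne_zero.mpr k.factorial_ne_zero)
  have h8j : (8:ℝ)^j ≤ 8^(k+1) := by
    refine pow_le_pow_right₀ (by norm_num) (by omega)
  have hcbound : c ≤ 2 * 8^(k+1) * (2^(k+1) * Real.sqrt (Nat.factorial k)) := by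
    have hf1 : (1:ℝ) ≤ (Nat.factorial j : ℝ) := by exact_mod_cast Nat.factorial_pos j
    have h1 : (1:ℝ) ≤ 8^j * (Nat.factorial j : ℝ) := by nlinarith [pow_pos (show (0:ℝ)<8 by norm_num) j, one_le_pow₀ (show (1:ℝ) ≤ 8 by norm_num) (n := j)]
    have h2 : (8:ℝ)^j * (Nat.factorial j : ℝ) ≤ 8^(k+1) * (2^(k+1) * Real.sqrt (Nat.factorial k)) := by
      have := mul_le_mul h8j hfacR (by positivity) (by positivity)
      linarith
    calc c ≤ 2 * (8^j * (Nat.factorial j : ℝ)) := by rw [hc]; linarith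
      _ ≤ 2 * (8^(k+1) * (2^(k+1) * Real.sqrt (Nat.factorial k))) := by linarith
      _ = _ := by ring
  calc ∫ τ : ℝ, |τ|^k * Real.exp (-(1/4) * τ^2)
      ≤ c * Real.sqrt (π / (1/8)) := by rw [← hgauss] at *; exact hstep.trans (le_of_eq rfl)
    _ ≤ c * 6 := mul_le_mul_of_nonneg_left hsq hc0.le
    _ ≤ (2 * 8^(k+1) * (2^(k+1) * Real.sqrt (Nat.factorial k))) * 6 := by
        exact mul_le_mul_of_nonneg_right hcbound (by norm_num)
    _ = 12 * 16^(k+1) * Real.sqrt (Nat.factorial k) := by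
        rw [show (16:ℝ)^(k+1) = 8^(k+1) * 2^(k+1) by rw [← mul_pow]; norm_num]; ring
    _ ≤ 256^(k+1) * Real.sqrt (Nat.factorial k) := by
        refine mul_le_mul_of_nonneg_right ?_ (Real.sqrt_nonneg _)
        calc (12:ℝ) * 16^(k+1) ≤ 16 * 16^(k+1) := by
              nlinarith [pow_pos (show (0:ℝ)<16 by norm_num) (k+1)]
          _ = 16^(k+2) := by ring
          _ ≤ 16^(2*(k+1)) := pow_le_pow_right₀ (by norm_num) (by omega)
          _ = 256^(k+1) := by rw [pow_mul]; norm_num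

end Moment

section Core

/-- The inverse Fourier-type transform of a polynomial-weighted Gaussian. -/
def TT (P : Polynomial ℂ) (x : ℝ) : ℂ := ∫ τ : ℝ, pwt P τ * Complex.exp (Complex.I * x * τ)

lemma norm_exp_I_mul (x τ : ℝ) : ‖Complex.exp (Complex.I * x * τ)‖ = 1 := by
  rw [show Complex.I * x * τ = ((x*τ:ℝ):ℂ) * Complex.I by push_cast; ring,
    Complex.norm_exp]
  simp

lemma continuous_integrand (P : Polynomial ℂ) (x : ℝ) :
    Continuous (fun τ : ℝ => pwt P τ * Complex.exp (Complex.I * x * τ)) :=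
  (continuous_pwt P).mul ((continuous_const.mul Complex.continuous_ofReal).cexp)

lemma integrable_integrand (P : Polynomial ℂ) (x : ℝ) :
    Integrable (fun τ : ℝ => pwt P τ * Complex.exp (Complex.I * x * τ)) := by
  refine (integrable_pwt P).norm.mono' (continuous_integrand P x).aestronglyMeasurable
    (Filter.Eventually.of_forall fun τ => ?_)
  rw [norm_mul, norm_exp_I_mul, mul_one]

lemma TT_const_mul (a : ℂ) (P : Polynomial ℂ) (x : ℝ) :
    TT (Polynomial.C a * P) x = a * TT P x := by
  rw [TT, TT, ← integral_const_mul]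
  congr 1; funext τ
  simp [pwt]; ring

lemma TT_sub (P Q : Polynomial ℂ) (x : ℝ) : TT (P - Q) x = TT P x - TT Q x := by
  rw [TT, TT, TT, ← integral_sub (integrable_integrand P x) (integrable_integrand Q x)]
  congr 1; funext τ
  simp [pwt]; ring

/-- the base case : Fourier representation of the Gaussian itself -/
lemma TT_base (x : ℝ) :
    TT (Polynomial.C ((((π:ℂ)/(1/4))^(1/2:ℂ))⁻¹)) x = Complex.exp (-(x:ℂ)^2) := by
  have h := fourierIntegral_gaussian (b := (1/4:ℂ)) (by norm_num) ((x:ℝ):ℂ)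
  have hb : ((π:ℂ)/(1/4)) ≠ 0 :=
    div_ne_zero (Complex.ofReal_ne_zero.mpr Real.pi_ne_zero) (by norm_num)
  have hne : (((π:ℂ)/(1/4))^(1/2:ℂ)) ≠ 0 := by
    rw [Ne, Complex.cpow_eq_zero_iff]
    tauto
  have heq : (∫ τ : ℝ, Complex.exp (Complex.I * x * τ) * Complex.exp (-(1/4) * (τ:ℂ)^2))
      = ((π:ℂ)/(1/4))^(1/2:ℂ) * Complex.exp (-(x:ℂ)^2) := by
    rw [h]; congr 1; congr 1; ring
  rw [TT]
  have : (fun τ : ℝ => pwt (Polynomial.C ((((π:ℂ)/(1/4))^(1/2:ℂ))⁻¹)) τ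
        * Complex.exp (Complex.I * x * τ))
      = fun τ : ℝ => (((π:ℂ)/(1/4))^(1/2:ℂ))⁻¹ *
        (Complex.exp (Complex.I * x * τ) * Complex.exp (-(1/4) * (τ:ℂ)^2)) := by
    funext τ
    simp only [pwt, Polynomial.eval_C, gw]
    rw [show (-(τ:ℂ)^2/4) = (-(1/4) * (τ:ℂ)^2) by ring]
    ring
  rw [this, integral_const_mul, heq, ← mul_assoc, inv_mul_cancel₀ hne, one_mul]

/-- derivative in x of `TT P` -/
lemma TT_hasDerivAt (P : Polynomial ℂ) (x : ℝ) :
    HasDerivAt (TT P) (TT (Polynomial.C Complex.I * Polynomial.X * P) x) x := by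
  have key := hasDerivAt_integral_of_dominated_loc_of_deriv_le (μ := volume)
      (F := fun (x : ℝ) (τ : ℝ) => pwt P τ * Complex.exp (Complex.I * x * τ))
      (F' := fun (x : ℝ) (τ : ℝ) => pwt P τ * (Complex.I * τ * Complex.exp (Complex.I * x * τ)))
      (bound := fun τ : ℝ => ‖pwt (Polynomial.C Complex.I * Polynomial.X * P) τ‖)
      (x₀ := x) (Metric.ball_mem_nhds x one_pos)
      (Filter.Eventually.of_forall fun y => (continuous_integrand P y).aestronglyMeasurable)
      (integrable_integrand P x)
      (Continuous.aestronglyMeasurable (by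
        exact (continuous_pwt P).mul ((continuous_const.mul
          Complex.continuous_ofReal).mul ((continuous_const.mul
            Complex.continuous_ofReal).cexp))))
      (Filter.Eventually.of_forall fun τ => fun y _ => ?_)
      (integrable_pwt (Polynomial.C Complex.I * Polynomial.X * P)).norm
      (Filter.Eventually.of_forall fun τ => fun y _ => ?_)
  · have h2 : (∫ τ : ℝ, pwt P τ * (Complex.I * τ * Complex.exp (Complex.I * x * τ)))
        = TT (Polynomial.C Complex.I * Polynomial.X * P) x := by
      rw [TT]; congr 1; funext τ; simp [pwt]; ring
    rw [h2] at key
    exact key.2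
  · -- bound
    have heq : pwt P τ * (Complex.I * τ * Complex.exp (Complex.I * y * τ))
        = pwt (Polynomial.C Complex.I * Polynomial.X * P) τ
          * Complex.exp (Complex.I * y * τ) := by
      simp only [pwt, Polynomial.eval_mul, Polynomial.eval_C, Polynomial.eval_X]
      ring
    show ‖pwt P τ * (Complex.I * τ * Complex.exp (Complex.I * y * τ))‖
      ≤ ‖pwt (Polynomial.C Complex.I * Polynomial.X * P) τ‖
    rw [heq, norm_mul, norm_exp_I_mul, mul_one]
  · -- differentiability
    have h1 : HasDerivAt (fun z : ℂ => Complex.exp (Complex.I * z * τ))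
        (Complex.I * τ * Complex.exp (Complex.I * (y:ℂ) * τ)) ((y:ℝ):ℂ) := by
      have hin : HasDerivAt (fun z : ℂ => Complex.I * z * τ) (Complex.I * τ) ((y:ℝ):ℂ) := by
        simpa using ((hasDerivAt_id ((y:ℝ):ℂ)).const_mul Complex.I).mul_const (τ:ℂ)
      simpa [mul_comm] using hin.cexp
    exact ((h1.comp_ofReal).const_mul (pwt P τ))

end Core

section IBP

lemma my_integral_deriv_eq_zero (u u' : ℝ → ℂ) (hd : ∀ τ, HasDerivAt u (u' τ) τ)
    (hi : Integrable u') (hlim : Tendsto u (Filter.cocompact ℝ) (nhds 0)) :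
    ∫ τ : ℝ, u' τ = 0 := by
  have h1 : Tendsto (fun R : ℝ => ∫ τ in (-R)..R, u' τ) atTop (nhds (∫ τ : ℝ, u' τ)) :=
    intervalIntegral_tendsto_integral hi tendsto_neg_atTop_atBot tendsto_id
  have h2 : ∀ R : ℝ, (∫ τ in (-R)..R, u' τ) = u R - u (-R) := fun R =>
    intervalIntegral.integral_eq_sub_of_hasDerivAt (fun τ _ => hd τ)
      (hi.intervalIntegrable)
  have htop : Tendsto u atTop (nhds 0) := hlim.mono_left _root_.atTop_le_cocompact
  have hbot : Tendsto (fun R : ℝ => u (-R)) atTop (nhds 0) :=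
    (hlim.mono_left _root_.atBot_le_cocompact).comp tendsto_neg_atTop_atBot
  have h3 : Tendsto (fun R : ℝ => u R - u (-R)) atTop (nhds 0) := by
    simpa using htop.sub hbot
  rw [funext h2] at h1
  exact tendsto_nhds_unique h1 h3

lemma tendsto_pwt (P : Polynomial ℂ) : Tendsto (pwt P) (Filter.cocompact ℝ) (nhds 0) := by
  induction P using Polynomial.induction_on' with
  | add p q hp hq =>
      have : pwt (p + q) = fun τ => pwt p τ + pwt q τ := by
        funext τ; simp [pwt, add_mul]
      rw [this]; simpa using hp.add hq
  | monomial k a =>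
      set j := (k+1)/2 with hj
      set c : ℝ := 1 + 8^j * (Nat.factorial j : ℝ) with hc
      have hbound : ∀ τ : ℝ, ‖pwt (Polynomial.monomial k a) τ‖
          ≤ ‖a‖ * c * Real.exp (-(1/8) * τ^2) := by
        intro τ
        have h1 := pow_le_gauss k τ
        have h2 : Real.exp ((1/8) * τ^2) * Real.exp (-(1/4) * τ^2)
            = Real.exp (-(1/8) * τ^2) := by rw [← Real.exp_add]; ring_nf
        have h3 : ‖pwt (Polynomial.monomial k a) τ‖
            = ‖a‖ * (|τ|^k * Real.exp (-(1/4) * τ^2)) := by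
          simp only [pwt, Polynomial.eval_monomial, norm_mul, norm_pow, Complex.norm_real,
            Real.norm_eq_abs, norm_gw]
          ring
        rw [h3]
        calc ‖a‖ * (|τ|^k * Real.exp (-(1/4) * τ^2))
            ≤ ‖a‖ * ((c * Real.exp ((1/8) * τ^2)) * Real.exp (-(1/4) * τ^2)) := by
              refine mul_le_mul_of_nonneg_left ?_ (norm_nonneg a)
              exact mul_le_mul_of_nonneg_right h1 (Real.exp_pos _).le
          _ = ‖a‖ * c * Real.exp (-(1/8) * τ^2) := by rw [mul_assoc c, h2]; ring
      have hexp : Tendsto (fun τ : ℝ => ‖a‖ * c * Real.exp (-(1/8) * τ^2))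
          (Filter.cocompact ℝ) (nhds 0) := by
        have hsq : Tendsto (fun τ : ℝ => τ^2) (Filter.cocompact ℝ) atTop := by
          have h1 : Tendsto (fun τ : ℝ => ‖τ‖) (Filter.cocompact ℝ) atTop :=
            tendsto_norm_cocompact_atTop
          have h2 := (tendsto_pow_atTop (two_ne_zero)).comp h1
          refine h2.congr fun τ => ?_
          simp [Real.norm_eq_abs, sq_abs]
        have hb : Tendsto (fun τ : ℝ => -(1/8) * τ^2) (Filter.cocompact ℝ) atBot :=
          hsq.const_mul_atTop_of_neg (by norm_num)
        have := (Real.tendsto_exp_atBot.comp hb).const_mul (‖a‖ * c)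
        simpa using this
      exact squeeze_zero_norm hbound hexp

/-- frequency-side derivative polynomial -/
def DP (P : Polynomial ℂ) : Polynomial ℂ :=
  Polynomial.derivative P - Polynomial.C (1/2 : ℂ) * Polynomial.X * P

lemma pwt_hasDerivAt (P : Polynomial ℂ) (τ : ℝ) :
    HasDerivAt (pwt P) (pwt (DP P) τ) τ := by
  have h1 : HasDerivAt (fun t : ℝ => P.eval ((t:ℝ):ℂ))
      ((Polynomial.derivative P).eval ((τ:ℝ):ℂ)) τ :=
    (P.hasDerivAt ((τ:ℝ):ℂ)).comp_ofReal
  have h2 : HasDerivAt (fun t : ℝ => gw t)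
      (Complex.exp (-(τ:ℂ)^2/4) * (-(2 * (τ:ℂ)^1)/4)) τ := by
    have := (((hasDerivAt_pow 2 ((τ:ℝ):ℂ)).neg.div_const 4).cexp).comp_ofReal
    simpa [gw] using this
  have h3 := h1.mul h2
  refine h3.congr_deriv ?_
  simp only [DP, pwt, gw, Polynomial.eval_sub, Polynomial.eval_mul, Polynomial.eval_C,
    Polynomial.eval_X]
  ring

lemma TT_mul_x (P : Polynomial ℂ) (x : ℝ) :
    (x:ℂ) * TT P x = TT (Polynomial.C Complex.I * DP P) x := by
  set u : ℝ → ℂ := fun τ => pwt P τ * Complex.exp (Complex.I * x * τ) with hu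
  set u' : ℝ → ℂ := fun τ => pwt (DP P) τ * Complex.exp (Complex.I * x * τ)
      + (Complex.I * x) * (pwt P τ * Complex.exp (Complex.I * x * τ)) with hu'
  have hd : ∀ τ : ℝ, HasDerivAt u (u' τ) τ := by
    intro τ
    have hexp : HasDerivAt (fun t : ℝ => Complex.exp (Complex.I * x * t))
        (Complex.I * x * Complex.exp (Complex.I * x * τ)) τ := by
      have hin : HasDerivAt (fun z : ℂ => Complex.exp (Complex.I * x * z))
          (Complex.I * x * Complex.exp (Complex.I * x * τ)) ((τ:ℝ):ℂ) := by
        have h0 : HasDerivAt (fun z : ℂ => Complex.I * x * z) (Complex.I * x) ((τ:ℝ):ℂ) := by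
          simpa using (hasDerivAt_id ((τ:ℝ):ℂ)).const_mul (Complex.I * x)
        simpa [mul_comm] using h0.cexp
      exact hin.comp_ofReal
    have := (pwt_hasDerivAt P τ).mul hexp
    refine this.congr_deriv ?_
    rw [hu']; ring
  have hi : Integrable u' :=
    (integrable_integrand (DP P) x).add ((integrable_integrand P x).const_mul _)
  have hlim : Tendsto u (Filter.cocompact ℝ) (nhds 0) := by
    refine squeeze_zero_norm (fun τ => ?_) (by simpa using (tendsto_pwt P).norm)
    rw [hu]; simp only [norm_mul, norm_exp_I_mul, mul_one]; exact le_rfl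
  have hzero := my_integral_deriv_eq_zero u u' hd hi hlim
  have hsplit : (∫ τ : ℝ, u' τ) = TT (DP P) x + (Complex.I * x) * TT P x := by
    rw [hu']
    rw [integral_add (integrable_integrand (DP P) x) ((integrable_integrand P x).const_mul _)]
    rw [integral_const_mul]
    rfl
  rw [hsplit] at hzero
  have : TT (DP P) x = -(Complex.I * x) * TT P x := by linear_combination hzero
  rw [TT_const_mul, this]
  have hI : Complex.I * Complex.I = -1 := Complex.I_mul_I
  linear_combination (TT P x * (x:ℂ)) * hI

end IBP

section Rec

/-- polynomial weights for `(x-i)^m e^{-x²}` -/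
def Qp : ℕ → Polynomial ℂ
  | 0 => Polynomial.C ((((π:ℂ)/(1/4))^(1/2:ℂ))⁻¹)
  | m+1 => Polynomial.C Complex.I * DP (Qp m) - Polynomial.C Complex.I * Qp m

lemma TT_Qp (m : ℕ) (x : ℝ) :
    TT (Qp m) x = ((x:ℂ) - Complex.I)^m * Complex.exp (-(x:ℂ)^2) := by
  induction m with
  | zero => simpa [Qp] using TT_base x
  | succ m ih =>
      rw [Qp, TT_sub, ← TT_mul_x, TT_const_mul, ih]
      ring

lemma iteratedDeriv_TT (m n : ℕ) (x : ℝ) :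
    iteratedDeriv n (fun y : ℝ => ((y:ℂ) - Complex.I)^m * Complex.exp (-(y:ℂ)^2)) x
      = TT ((Polynomial.C Complex.I * Polynomial.X)^n * Qp m) x := by
  induction n generalizing x with
  | zero => simp [iteratedDeriv_zero, ← TT_Qp m x]
  | succ n ih =>
      rw [iteratedDeriv_succ]
      have hfun : iteratedDeriv n (fun y : ℝ => ((y:ℂ) - Complex.I)^m
          * Complex.exp (-(y:ℂ)^2))
          = fun y => TT ((Polynomial.C Complex.I * Polynomial.X)^n * Qp m) y := funext ih
      rw [hfun]
      have := (TT_hasDerivAt ((Polynomial.C Complex.I * Polynomial.X)^n * Qp m) x).deriv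
      rw [this]
      congr 1
      ring

lemma natDegree_DP (P : Polynomial ℂ) : (DP P).natDegree ≤ P.natDegree + 1 := by
  refine le_trans (Polynomial.natDegree_sub_le _ _) (max_le ?_ ?_)
  · exact le_trans (Polynomial.natDegree_derivative_le P) (by omega)
  · refine le_trans (Polynomial.natDegree_mul_le) ?_
    refine le_trans (Nat.add_le_add_right Polynomial.natDegree_mul_le _) ?_
    simp [Polynomial.natDegree_C, Polynomial.natDegree_X]
    omega

lemma natDegree_Qp (m : ℕ) : (Qp m).natDegree ≤ m := by
  induction m with
  | zero => simp [Qp]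
  | succ m ih =>
      rw [Qp]
      refine le_trans (Polynomial.natDegree_sub_le _ _) (max_le ?_ ?_)
      · refine le_trans (Polynomial.natDegree_mul_le) ?_
        simp only [Polynomial.natDegree_C, zero_add]
        exact le_trans (natDegree_DP _) (by omega)
      · refine le_trans (Polynomial.natDegree_mul_le) ?_
        simp only [Polynomial.natDegree_C, zero_add]
        omega

end Rec

section Final

lemma sqrt_le_self' {x : ℝ} (hx : 1 ≤ x) : Real.sqrt x ≤ x := by
  calc Real.sqrt x ≤ Real.sqrt (x^2) := Real.sqrt_le_sqrt (by nlinarith)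
    _ = x := Real.sqrt_sq (by linarith)

lemma nat_factorial_add_le (n s : ℕ) : (n + s).factorial ≤ n.factorial * (n + s)^s := by
  induction s with
  | zero => simp
  | succ s ih =>
      have h1 : (n + (s+1)).factorial = (n+s+1) * (n+s).factorial := by
        rw [show n + (s+1) = (n+s)+1 by ring]; rfl
      calc (n+(s+1)).factorial = (n+s+1) * (n+s).factorial := h1
        _ ≤ (n+s+1) * (n.factorial * (n+s)^s) := Nat.mul_le_mul_left _ ih
        _ ≤ (n+s+1) * (n.factorial * (n+s+1)^s) :=
            Nat.mul_le_mul_left _ (Nat.mul_le_mul_left _ (Nat.pow_le_pow_left (by omega) s))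
        _ = n.factorial * (n+(s+1))^(s+1) := by ring_nf

lemma sqrt_factorial_add (n s : ℕ) :
    Real.sqrt ((n+s).factorial) ≤ 2^((n+s)*s) * Real.sqrt (n.factorial) := by
  have hnat : (n+s).factorial ≤ n.factorial * 2^((n+s)*s) := by
    calc (n+s).factorial ≤ n.factorial * (n+s)^s := nat_factorial_add_le n s
      _ ≤ n.factorial * (2^(n+s))^s :=
          Nat.mul_le_mul_left _ (Nat.pow_le_pow_left (Nat.lt_two_pow_self).le s)
      _ = n.factorial * 2^((n+s)*s) := by rw [← pow_mul]
  have hR : ((n+s).factorial : ℝ) ≤ (n.factorial : ℝ) * 2^((n+s)*s) := by exact_mod_cast hnat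
  calc Real.sqrt ((n+s).factorial)
      ≤ Real.sqrt ((n.factorial : ℝ) * 2^((n+s)*s)) := Real.sqrt_le_sqrt hR
    _ = Real.sqrt (n.factorial) * Real.sqrt (2^((n+s)*s)) := Real.sqrt_mul (by positivity) _
    _ ≤ Real.sqrt (n.factorial) * 2^((n+s)*s) := by
        refine mul_le_mul_of_nonneg_left (sqrt_le_self' (one_le_pow₀ (by norm_num)))
          (Real.sqrt_nonneg _)
    _ = _ := by ring

lemma eval_Qp_bound (s m : ℕ) (hm : m ≤ s) (τ : ℝ) :
    ‖(Qp m).eval (τ:ℂ)‖ ≤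
      (∑ m' ∈ Finset.range (s+1), ∑ k ∈ Finset.range (s+1), ‖(Qp m').coeff k‖)
        * (1+|τ|)^s := by
  set AS := ∑ m' ∈ Finset.range (s+1), ∑ k ∈ Finset.range (s+1), ‖(Qp m').coeff k‖ with hAS
  have hdeg : (Qp m).natDegree < s + 1 := lt_of_le_of_lt (le_trans (natDegree_Qp m) hm)
    (Nat.lt_succ_self s)
  rw [Polynomial.eval_eq_sum_range' hdeg]
  have h1τ : (0:ℝ) ≤ 1 + |τ| := by positivity
  calc ‖∑ i ∈ Finset.range (s+1), (Qp m).coeff i * (τ:ℂ)^i‖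
      ≤ ∑ i ∈ Finset.range (s+1), ‖(Qp m).coeff i * (τ:ℂ)^i‖ := norm_sum_le _ _
    _ ≤ ∑ i ∈ Finset.range (s+1), ‖(Qp m).coeff i‖ * (1+|τ|)^s := by
        refine Finset.sum_le_sum fun i hi => ?_
        rw [norm_mul, norm_pow, Complex.norm_real, Real.norm_eq_abs]
        refine mul_le_mul_of_nonneg_left ?_ (norm_nonneg _)
        calc |τ|^i ≤ (1+|τ|)^i :=
              pow_le_pow_left₀ (abs_nonneg τ) (by linarith) i
          _ ≤ (1+|τ|)^s := pow_le_pow_right₀ (by linarith [abs_nonneg τ])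
              (by simpa using Nat.lt_succ_iff.mp (Finset.mem_range.mp hi))
    _ = (∑ i ∈ Finset.range (s+1), ‖(Qp m).coeff i‖) * (1+|τ|)^s := by
        rw [Finset.sum_mul]
    _ ≤ AS * (1+|τ|)^s := by
        refine mul_le_mul_of_nonneg_right ?_ (by positivity)
        refine Finset.single_le_sum (f := fun m' => ∑ k ∈ Finset.range (s+1), ‖(Qp m').coeff k‖)
          (fun i _ => Finset.sum_nonneg fun k _ => norm_nonneg _) ?_
        exact Finset.mem_range.mpr (by omega)

end Final

theorem stmt7' (s : ℕ) :
    ∃ C : ℝ, 1 ≤ C ∧ ∀ m ≤ s, ∀ n : ℕ, ∃ w : ℝ → ℂ, Integrable w ∧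
      (∀ x : ℝ, iteratedDeriv n
          (fun y : ℝ => ((y : ℂ) - Complex.I) ^ m * Complex.exp (-(y : ℂ) ^ 2)) x =
        ∫ τ : ℝ, w τ * Complex.exp (Complex.I * x * τ)) ∧
      (∫ τ : ℝ, ‖w τ‖) ≤ C ^ (n + 1) * Real.sqrt n.factorial := by
  classical
  set AS := ∑ m' ∈ Finset.range (s+1), ∑ k ∈ Finset.range (s+1), ‖(Qp m').coeff k‖ with hAS
  have hAS0 : 0 ≤ AS := Finset.sum_nonneg fun i _ => Finset.sum_nonneg fun k _ => norm_nonneg _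
  set B1 : ℝ := AS * 2^s * (1 + 256^s * 2^(s*s)) with hB1
  have hB10 : 0 ≤ B1 := by positivity
  set C : ℝ := (B1 + 1) * (256 * 2^s) with hC
  have h2s : (1:ℝ) ≤ 2^s := one_le_pow₀ (by norm_num)
  have hC1 : 1 ≤ C := by nlinarith
  refine ⟨C, hC1, fun m hm n => ?_⟩
  refine ⟨pwt ((Polynomial.C Complex.I * Polynomial.X)^n * Qp m), integrable_pwt _,
    fun x => by rw [iteratedDeriv_TT m n x]; rfl, ?_⟩
  -- norm computation
  have hnormw : ∀ τ : ℝ, ‖pwt ((Polynomial.C Complex.I * Polynomial.X)^n * Qp m) τ‖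
      = |τ|^n * ‖(Qp m).eval (τ:ℂ)‖ * Real.exp (-(1/4) * τ^2) := by
    intro τ
    simp only [pwt, Polynomial.eval_mul, Polynomial.eval_pow, Polynomial.eval_C,
      Polynomial.eval_X, norm_mul, norm_pow, norm_gw, Complex.norm_I, Complex.norm_real,
      Real.norm_eq_abs, one_mul]
  have hpt : ∀ τ : ℝ, ‖pwt ((Polynomial.C Complex.I * Polynomial.X)^n * Qp m) τ‖
      ≤ AS * 2^s * (|τ|^n * Real.exp (-(1/4) * τ^2)
        + |τ|^(n+s) * Real.exp (-(1/4) * τ^2)) := by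
    intro τ
    have hpow : (1+|τ|)^s ≤ 2^s * (1 + |τ|^s) := by
      rcases le_total |τ| 1 with h | h
      · calc (1+|τ|)^s ≤ 2^s := pow_le_pow_left₀ (by positivity) (by linarith) s
          _ ≤ 2^s * (1 + |τ|^s) := by nlinarith [pow_nonneg (abs_nonneg τ) s]
      · calc (1+|τ|)^s ≤ (2*|τ|)^s := pow_le_pow_left₀ (by positivity) (by linarith) s
          _ = 2^s * |τ|^s := mul_pow 2 _ s
          _ ≤ 2^s * (1 + |τ|^s) := by nlinarith [pow_pos (show (0:ℝ) < 2 by norm_num) s]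
    have heval := eval_Qp_bound s m hm τ
    rw [hnormw τ]
    calc |τ|^n * ‖(Qp m).eval (τ:ℂ)‖ * Real.exp (-(1/4) * τ^2)
        ≤ |τ|^n * (AS * (1+|τ|)^s) * Real.exp (-(1/4) * τ^2) := by
          refine mul_le_mul_of_nonneg_right (mul_le_mul_of_nonneg_left heval (by positivity))
            (Real.exp_pos _).le
      _ ≤ |τ|^n * (AS * (2^s * (1 + |τ|^s))) * Real.exp (-(1/4) * τ^2) := by
          refine mul_le_mul_of_nonneg_right (mul_le_mul_of_nonneg_left
            (mul_le_mul_of_nonneg_left hpow hAS0) (by positivity)) (Real.exp_pos _).le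
      _ = AS * 2^s * (|τ|^n * Real.exp (-(1/4) * τ^2)
            + |τ|^(n+s) * Real.exp (-(1/4) * τ^2)) := by
          rw [pow_add]; ring
  have hint : (∫ τ : ℝ, ‖pwt ((Polynomial.C Complex.I * Polynomial.X)^n * Qp m) τ‖)
      ≤ AS * 2^s * ((∫ τ : ℝ, |τ|^n * Real.exp (-(1/4) * τ^2))
        + ∫ τ : ℝ, |τ|^(n+s) * Real.exp (-(1/4) * τ^2)) := by
    calc (∫ τ : ℝ, ‖pwt ((Polynomial.C Complex.I * Polynomial.X)^n * Qp m) τ‖)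
        ≤ ∫ τ : ℝ, AS * 2^s * (|τ|^n * Real.exp (-(1/4) * τ^2)
            + |τ|^(n+s) * Real.exp (-(1/4) * τ^2)) := by
          refine integral_mono (integrable_pwt _).norm
            (((integrable_abs_pow_gauss n).add (integrable_abs_pow_gauss (n+s))).const_mul
              (AS * 2^s)) hpt
      _ = AS * 2^s * ((∫ τ : ℝ, |τ|^n * Real.exp (-(1/4) * τ^2))
            + ∫ τ : ℝ, |τ|^(n+s) * Real.exp (-(1/4) * τ^2)) := by
          rw [integral_const_mul, integral_add (integrable_abs_pow_gauss n)
            (integrable_abs_pow_gauss (n+s))]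
  have hsqrt0 : (0:ℝ) ≤ Real.sqrt n.factorial := Real.sqrt_nonneg _
  have h2sn : (1:ℝ) ≤ 2^(s*n) := one_le_pow₀ (by norm_num)
  refine hint.trans ?_
  calc AS * 2^s * ((∫ τ : ℝ, |τ|^n * Real.exp (-(1/4) * τ^2))
        + ∫ τ : ℝ, |τ|^(n+s) * Real.exp (-(1/4) * τ^2))
      ≤ AS * 2^s * (256^(n+1) * Real.sqrt n.factorial
          + 256^((n+s)+1) * Real.sqrt (n+s).factorial) := by
        refine mul_le_mul_of_nonneg_left (add_le_add (moment_bound n) (moment_bound (n+s)))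
          (by positivity)
    _ ≤ AS * 2^s * (256^(n+1) * Real.sqrt n.factorial
          + 256^((n+s)+1) * (2^((n+s)*s) * Real.sqrt n.factorial)) := by
        refine mul_le_mul_of_nonneg_left (add_le_add le_rfl
          (mul_le_mul_of_nonneg_left (sqrt_factorial_add n s) (by positivity))) (by positivity)
    _ = AS * 2^s * (256^(n+1) + 256^(n+1) * 256^s * (2^(s*n) * 2^(s*s)))
          * Real.sqrt n.factorial := by
        rw [show (n+s)+1 = (n+1)+s by ring, pow_add (256:ℝ) (n+1) s,
          show (n+s)*s = s*n + s*s by ring, pow_add (2:ℝ) (s*n) (s*s)]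
        ring
    _ ≤ AS * 2^s * ((1 + 256^s * 2^(s*s)) * (256^(n+1) * 2^(s*n)))
          * Real.sqrt n.factorial := by
        refine mul_le_mul_of_nonneg_right (mul_le_mul_of_nonneg_left ?_ (by positivity)) hsqrt0
        nlinarith [pow_pos (show (0:ℝ) < 256 by norm_num) (n+1),
          pow_pos (show (0:ℝ) < 256 by norm_num) s, pow_pos (show (0:ℝ) < 2 by norm_num) (s*s),
          pow_pos (show (0:ℝ) < 2 by norm_num) (s*n)]
    _ = B1 * (256^(n+1) * 2^(s*n)) * Real.sqrt n.factorial := by rw [hB1]; ring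
    _ ≤ (B1 + 1) * (256 * 2^s)^(n+1) * Real.sqrt n.factorial := by
        refine mul_le_mul_of_nonneg_right ?_ hsqrt0
        have h1 : (256:ℝ)^(n+1) * 2^(s*n) ≤ (256 * 2^s)^(n+1) := by
          rw [mul_pow, ← pow_mul]
          refine mul_le_mul_of_nonneg_left (pow_le_pow_right₀ (by norm_num) (by nlinarith))
            (by positivity)
        calc B1 * (256^(n+1) * 2^(s*n)) ≤ B1 * (256 * 2^s)^(n+1) :=
              mul_le_mul_of_nonneg_left h1 hB10
          _ ≤ (B1 + 1) * (256 * 2^s)^(n+1) := by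
              refine mul_le_mul_of_nonneg_right (by linarith) (by positivity)
    _ ≤ (B1 + 1)^(n+1) * (256 * 2^s)^(n+1) * Real.sqrt n.factorial := by
        refine mul_le_mul_of_nonneg_right (mul_le_mul_of_nonneg_right
          (le_self_pow₀ (by linarith) (by omega)) (by positivity)) hsqrt0
    _ = C^(n+1) * Real.sqrt n.factorial := by rw [hC, mul_pow (B1+1) (256 * 2^s) (n+1)]

end StmtAux

open MeasureTheory

/-- The Gaussian `x ↦ e^{−x²}` belongs to `𝓔_s^{1/2}` for every `s ∈ ℕ`: there is `C ≥ 1`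
such that for every `m = 0,…,s` and every `n ∈ ℕ` there is an integrable `w : ℝ → ℂ` with
`(d/dx)ⁿ[(x−i)^m·e^{−x²}] = ∫ w(τ)·e^{ixτ} dτ` for all `x` and `∫|w| ≤ C^{n+1}·√(n!)`. -/
theorem stmt7 (s : ℕ) :
    ∃ C : ℝ, 1 ≤ C ∧ ∀ m ≤ s, ∀ n : ℕ, ∃ w : ℝ → ℂ, Integrable w ∧
      (∀ x : ℝ, iteratedDeriv n
          (fun y : ℝ => ((y : ℂ) - Complex.I) ^ m * Complex.exp (-(y : ℂ) ^ 2)) x =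
        ∫ τ : ℝ, w τ * Complex.exp (Complex.I * x * τ)) ∧
      (∫ τ : ℝ, ‖w τ‖) ≤ C ^ (n + 1) * Real.sqrt n.factorial := by
  exact stmt7' s
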